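/- arXiv:2601.05442 — 7 statements merged into one kernel-verified Lean document; each statement's English description precedes it below -/
import Mathlib

section
/- Let f : [n] → {1,2,3} be given by f(x) = 1 if x ≡ 1 (mod 3), f(x) = 2 if x ≡ 2 (mod 3), f(x) = 3 if x ≡ 0 (mod 3). Then the number of rainbow triples (x, y, z) ∈ [n]³ with x + y = 2z is n²/3 + O(n); in particular there exists a constant C such that this count is at least n²/3 - Cn for all n. -/
def col3 (x : ℕ) : ℕ := if x % 3 = 1 then 1 else if x % 3 = 2 then 2 else 3

open Finset

lemma col3_ne (x y : ℕ) : col3 x ≠ col3 y ↔ x % 3 ≠ y % 3 := by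
  unfold col3
  have hx : x % 3 = 0 ∨ x % 3 = 1 ∨ x % 3 = 2 := by omega
  have hy : y % 3 = 0 ∨ y % 3 = 1 ∨ y % 3 = 2 := by omega
  rcases hx with h|h|h <;> rcases hy with h'|h'|h' <;> simp [h, h']

lemma card_eq3 (n : ℕ) :
    ((Icc 1 n ×ˢ Icc 1 n ×ˢ Icc 1 n).filter
        (fun t => t.1 + t.2.1 = 2 * t.2.2 ∧ col3 t.1 ≠ col3 t.2.1 ∧
          col3 t.1 ≠ col3 t.2.2 ∧ col3 t.2.1 ≠ col3 t.2.2)).card =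
    ((Icc 1 n ×ˢ Icc 1 n).filter (fun p => p.1 % 2 = p.2 % 2 ∧ p.1 % 6 ≠ p.2 % 6)).card := by
  apply Finset.card_nbij' (i := fun t => (t.1, t.2.1))
    (j := fun p => (p.1, p.2, (p.1 + p.2) / 2))
  · intro t ht
    simp only [mem_coe, mem_filter, mem_product, mem_Icc] at ht ⊢
    obtain ⟨⟨hx, hy, hz⟩, heq, h1, h2, h3⟩ := ht
    rw [col3_ne] at h1 h2 h3
    refine ⟨⟨hx, hy⟩, ?_, ?_⟩ <;> omega
  · intro p hp
    simp only [mem_coe, mem_filter, mem_product, mem_Icc] at hp ⊢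
    obtain ⟨⟨hx, hy⟩, hpar, hmod⟩ := hp
    rw [col3_ne, col3_ne, col3_ne]
    refine ⟨⟨hx, hy, ?_⟩, ?_, ?_, ?_, ?_⟩ <;> omega
  · intro t ht
    simp only [mem_coe, mem_filter, mem_product, mem_Icc] at ht
    obtain ⟨-, heq, -⟩ := ht
    have h : (t.1 + t.2.1) / 2 = t.2.2 := by omega
    simp [h]
  · intro p hp
    rfl

lemma countmod (r n : ℕ) (hr : r < 6) :
    ((Icc 1 n).filter (fun y => y % 6 = r)).card = (n + (6 - r) % 6) / 6 := by
  induction n with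
  | zero =>
    rw [show Icc 1 0 = (∅ : Finset ℕ) by simp]
    simp only [filter_empty, card_empty]
    omega
  | succ n ih =>
    rw [show Icc 1 (n + 1) = insert (n + 1) (Icc 1 n) by
      ext a; simp only [mem_insert, mem_Icc]; omega]
    rw [filter_insert]
    split_ifs with h
    · rw [card_insert_of_notMem (by simp), ih]
      omega
    · rw [ih]; omega

lemma inner_card (x n : ℕ) :
    n ≤ 3 * ((Icc 1 n).filter (fun y => x % 2 = y % 2 ∧ x % 6 ≠ y % 6)).card + 12 ∧
    3 * ((Icc 1 n).filter (fun y => x % 2 = y % 2 ∧ x % 6 ≠ y % 6)).card ≤ n + 12 := by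
  set t1 := (x % 6 + 2) % 6 with ht1
  set t2 := (x % 6 + 4) % 6 with ht2
  have hset : (Icc 1 n).filter (fun y => x % 2 = y % 2 ∧ x % 6 ≠ y % 6) =
      (Icc 1 n).filter (fun y => y % 6 = t1) ∪ (Icc 1 n).filter (fun y => y % 6 = t2) := by
    rw [← filter_or]
    apply filter_congr
    intro y _
    constructor <;> intro h <;> omega
  have hdisj : Disjoint ((Icc 1 n).filter (fun y => y % 6 = t1))
      ((Icc 1 n).filter (fun y => y % 6 = t2)) := by
    simp only [Finset.disjoint_left, mem_filter]
    rintro a ⟨-, h1⟩ ⟨-, h2⟩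
    omega
  rw [hset, card_union_of_disjoint hdisj, countmod t1 n (by omega), countmod t2 n (by omega)]
  omega

lemma s2_bounds (n : ℕ) :
    n * n ≤ 3 * ((Icc 1 n ×ˢ Icc 1 n).filter
        (fun p => p.1 % 2 = p.2 % 2 ∧ p.1 % 6 ≠ p.2 % 6)).card + 12 * n ∧
    3 * ((Icc 1 n ×ˢ Icc 1 n).filter
        (fun p => p.1 % 2 = p.2 % 2 ∧ p.1 % 6 ≠ p.2 % 6)).card ≤ n * n + 12 * n := by
  have hcard : ((Icc 1 n ×ˢ Icc 1 n).filter
      (fun p => p.1 % 2 = p.2 % 2 ∧ p.1 % 6 ≠ p.2 % 6)).card =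
      ∑ x ∈ Icc 1 n, ((Icc 1 n).filter (fun y => x % 2 = y % 2 ∧ x % 6 ≠ y % 6)).card := by
    rw [Finset.card_filter, Finset.sum_product]
    exact Finset.sum_congr rfl fun x _ => (Finset.card_filter _ _).symm
  rw [hcard]
  have hA : ∑ _x ∈ Icc 1 n, n ≤
      ∑ x ∈ Icc 1 n, (3 * ((Icc 1 n).filter (fun y => x % 2 = y % 2 ∧ x % 6 ≠ y % 6)).card + 12) :=
    Finset.sum_le_sum fun x _ => (inner_card x n).1
  have hB : ∑ x ∈ Icc 1 n, 3 * ((Icc 1 n).filter (fun y => x % 2 = y % 2 ∧ x % 6 ≠ y % 6)).card ≤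
      ∑ _x ∈ Icc 1 n, (n + 12) :=
    Finset.sum_le_sum fun x _ => (inner_card x n).2
  rw [Finset.sum_const, Nat.card_Icc] at hA hB
  rw [Finset.sum_add_distrib, Finset.sum_const, Nat.card_Icc, ← Finset.mul_sum] at hA
  rw [← Finset.mul_sum] at hB
  simp only [smul_eq_mul, Nat.add_sub_cancel] at hA hB
  have e : n * (n + 12) = n * n + 12 * n := by ring
  rw [e] at hB
  omega

theorem stmt8 : ∃ C : ℝ, ∀ n : ℕ,
    |((((Finset.Icc 1 n ×ˢ Finset.Icc 1 n ×ˢ Finset.Icc 1 n).filter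
        (fun t => t.1 + t.2.1 = 2 * t.2.2 ∧ col3 t.1 ≠ col3 t.2.1 ∧
          col3 t.1 ≠ col3 t.2.2 ∧ col3 t.2.1 ≠ col3 t.2.2)).card : ℝ) -
      (n : ℝ) ^ 2 / 3)| ≤ C * n := by
  refine ⟨4, fun n => ?_⟩
  obtain ⟨h1, h2⟩ := s2_bounds n
  rw [card_eq3 n, abs_le]
  have hc1 : ((n : ℝ) * n) ≤ 3 * (((Icc 1 n ×ˢ Icc 1 n).filter
      (fun p => p.1 % 2 = p.2 % 2 ∧ p.1 % 6 ≠ p.2 % 6)).card : ℝ) + 12 * n := by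
    exact_mod_cast h1
  have hc2 : 3 * (((Icc 1 n ×ˢ Icc 1 n).filter
      (fun p => p.1 % 2 = p.2 % 2 ∧ p.1 % 6 ≠ p.2 % 6)).card : ℝ) ≤ (n : ℝ) * n + 12 * n := by
    exact_mod_cast h2
  constructor <;> [nlinarith [hc1]; nlinarith [hc2]]
end

section
/- For every ε > 0, for all sufficiently large n there is a 3-coloring f of [n] such that the proportion of rainbow triples among all triples (x, y, z) ∈ [n]³ with x + y = 2z is at least 2/3 − ε. -/
set_option maxHeartbeats 1000000

theorem aux9 (ε : ℝ) (hε : 0 < ε) (n : ℕ) (hn4 : 4 ≤ n)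
    (hεn : (7 : ℝ) ≤ ε * ((n : ℝ) - 1))
    (f : ℕ → Fin 3) (hf : ∀ x, (f x : ℕ) = x % 3) :
    (2 / 3 - ε) *
        ((((Finset.Icc 1 n ×ˢ Finset.Icc 1 n ×ˢ Finset.Icc 1 n).filter
          (fun t => t.1 + t.2.1 = 2 * t.2.2)).card : ℝ)) ≤
      ((((Finset.Icc 1 n ×ˢ Finset.Icc 1 n ×ˢ Finset.Icc 1 n).filter
          (fun t => t.1 + t.2.1 = 2 * t.2.2 ∧ f t.1 ≠ f t.2.1 ∧
            f t.1 ≠ f t.2.2 ∧ f t.2.1 ≠ f t.2.2)).card : ℝ)) := by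
  set B := Finset.Icc 1 n ×ˢ Finset.Icc 1 n ×ˢ Finset.Icc 1 n with hB
  set S := B.filter (fun t : ℕ × ℕ × ℕ => t.1 + t.2.1 = 2 * t.2.2) with hS
  set R := B.filter (fun t : ℕ × ℕ × ℕ => t.1 + t.2.1 = 2 * t.2.2 ∧ f t.1 ≠ f t.2.1 ∧
            f t.1 ≠ f t.2.2 ∧ f t.2.1 ≠ f t.2.2) with hR
  set M := B.filter (fun t : ℕ × ℕ × ℕ => t.1 + t.2.1 = 2 * t.2.2 ∧
      (f t.1 = f t.2.1 ∨ f t.1 = f t.2.2 ∨ f t.2.1 = f t.2.2)) with hM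
  have hval : ∀ a b : ℕ, f a = f b ↔ a % 3 = b % 3 := by
    intro a b
    rw [Fin.ext_iff, hf, hf]
  have hsub : S ⊆ R ∪ M := by
    intro t ht
    rw [hS, Finset.mem_filter] at ht
    rw [Finset.mem_union, hR, hM, Finset.mem_filter, Finset.mem_filter]
    tauto
  have hsplit : S.card ≤ R.card + M.card :=
    le_trans (Finset.card_le_card hsub) (Finset.card_union_le _ _)
  have hSlow : n / 2 * n ≤ S.card := by
    have h := Finset.card_le_card_of_injOn
      (fun p : ℕ × ℕ => (2 * p.1 - p.2 % 2, p.2, p.1 + p.2 / 2))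
      (s := Finset.Icc 1 (n / 2) ×ˢ Finset.Icc 1 n) (t := S)
      (by
        intro p hp
        simp only [Finset.mem_coe, Finset.mem_product, Finset.mem_Icc] at hp
        simp only [Finset.mem_coe, hS, hB, Finset.mem_filter, Finset.mem_product, Finset.mem_Icc]
        omega)
      (by
        rintro ⟨a, b⟩ hp ⟨c, d⟩ hq h
        simp only [Finset.coe_product, Set.mem_prod, Finset.mem_coe, Finset.mem_Icc] at hp hq
        simp only [Prod.mk.injEq] at h ⊢
        omega)
    simpa [Nat.card_Icc] using h
  have key : ∀ t ∈ M, 1 ≤ t.1 ∧ t.1 ≤ n ∧ 1 ≤ t.2.1 ∧ t.2.1 ≤ n ∧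
      t.1 + t.2.1 = 2 * t.2.2 ∧ t.1 % 6 = t.2.1 % 6 := by
    intro t ht
    rw [hM, Finset.mem_filter] at ht
    obtain ⟨htB, hsol, hbad⟩ := ht
    rw [hB] at htB
    simp only [Finset.mem_product, Finset.mem_Icc] at htB
    obtain ⟨⟨hx1, hx2⟩, ⟨hy1, hy2⟩, hz⟩ := htB
    rw [hval, hval, hval] at hbad
    refine ⟨hx1, hx2, hy1, hy2, hsol, ?_⟩
    rcases hbad with h | h | h <;> omega
  have hMup : M.card ≤ n * (n / 6 + 1) := by
    have h := Finset.card_le_card_of_injOn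
      (fun t : ℕ × ℕ × ℕ => (t.1, t.2.1 / 6))
      (s := M) (t := Finset.Icc 1 n ×ˢ Finset.range (n / 6 + 1))
      (by
        intro t ht
        obtain ⟨h1, h2, h3, h4, h5, h6⟩ := key t ht
        simp only [Finset.mem_coe, Finset.mem_product, Finset.mem_Icc, Finset.mem_range]
        refine ⟨⟨h1, h2⟩, ?_⟩
        omega)
      (by
        intro t ht u hu h
        obtain ⟨h1, h2, h3, h4, h5, h6⟩ := key _ (Finset.mem_coe.mp ht)
        obtain ⟨g1, g2, g3, g4, g5, g6⟩ := key _ (Finset.mem_coe.mp hu)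
        simp only [Prod.mk.injEq] at h
        obtain ⟨e1, e2⟩ := h
        have e3 : t.2.1 = u.2.1 := by omega
        have e4 : t.2.2 = u.2.2 := by omega
        exact Prod.ext_iff.mpr ⟨e1, Prod.ext_iff.mpr ⟨e3, e4⟩⟩)
    simpa [Nat.card_Icc] using h
  have h1 : (S.card : ℝ) ≤ (R.card : ℝ) + M.card := by exact_mod_cast hsplit
  have hcast1 : ((n / 2 : ℕ) : ℝ) * n ≤ S.card := by exact_mod_cast hSlow
  have hcast2 : (M.card : ℝ) ≤ n * (((n / 6 : ℕ) : ℝ) + 1) := by exact_mod_cast hMup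
  have hd2 : (n : ℝ) - 1 ≤ 2 * ((n / 2 : ℕ) : ℝ) := by
    have h : n ≤ 2 * (n / 2) + 1 := by omega
    have h' : (n : ℝ) ≤ 2 * ((n / 2 : ℕ) : ℝ) + 1 := by exact_mod_cast h
    linarith
  have hd6 : 6 * ((n / 6 : ℕ) : ℝ) ≤ n := by
    have h : 6 * (n / 6) ≤ n := by omega
    exact_mod_cast h
  have hx0 : (0 : ℝ) ≤ (n : ℝ) := Nat.cast_nonneg n
  have hs0 : (0 : ℝ) ≤ (S.card : ℝ) := Nat.cast_nonneg _
  have e1 : 6 * (M.card : ℝ) ≤ (n : ℝ) * n + 6 * n := by nlinarith [hcast2, hd6, hx0]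
  have e2 : (n : ℝ) * n - n ≤ 2 * (S.card : ℝ) := by nlinarith [hcast1, hd2, hx0]
  have e3 : 7 * (n : ℝ) ≤ 6 * (ε * (S.card : ℝ)) := by
    have a1 : 0 ≤ ε * (2 * (S.card : ℝ) - ((n : ℝ) * n - n)) :=
      mul_nonneg hε.le (by linarith)
    have a2 : 7 * (n : ℝ) ≤ ε * ((n : ℝ) - 1) * n := by nlinarith [hεn, hx0]
    nlinarith [a1, a2, hs0, hε.le, hx0]
  nlinarith [e1, e2, e3, hs0, h1]

theorem stmt9 (ε : ℝ) (hε : 0 < ε) : ∃ N : ℕ, ∀ n : ℕ, N ≤ n →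
    ∃ f : ℕ → Fin 3, (∀ c : Fin 3, ∃ x ∈ Finset.Icc 1 n, f x = c) ∧
      (2 / 3 - ε) *
        ((((Finset.Icc 1 n ×ˢ Finset.Icc 1 n ×ˢ Finset.Icc 1 n).filter
          (fun t => t.1 + t.2.1 = 2 * t.2.2)).card : ℝ)) ≤
      ((((Finset.Icc 1 n ×ˢ Finset.Icc 1 n ×ˢ Finset.Icc 1 n).filter
          (fun t => t.1 + t.2.1 = 2 * t.2.2 ∧ f t.1 ≠ f t.2.1 ∧
            f t.1 ≠ f t.2.2 ∧ f t.2.1 ≠ f t.2.2)).card : ℝ)) := by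
  refine ⟨⌈7 / ε⌉₊ + 4, fun n hn => ?_⟩
  have hn4 : 4 ≤ n := le_trans (Nat.le_add_left 4 _) hn
  refine ⟨fun x => ⟨x % 3, Nat.mod_lt _ (by norm_num)⟩, ?_, ?_⟩
  · intro c
    fin_cases c
    · exact ⟨3, Finset.mem_Icc.2 ⟨by omega, by omega⟩, rfl⟩
    · exact ⟨1, Finset.mem_Icc.2 ⟨by omega, by omega⟩, rfl⟩
    · exact ⟨2, Finset.mem_Icc.2 ⟨by omega, by omega⟩, rfl⟩
  · have hc : (7 / ε : ℝ) ≤ (⌈7 / ε⌉₊ : ℝ) := Nat.le_ceil _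
    have hn' : ((⌈7 / ε⌉₊ + 4 : ℕ) : ℝ) ≤ (n : ℝ) := by exact_mod_cast hn
    push_cast at hn'
    have h1 : 7 / ε ≤ (n : ℝ) - 1 := by linarith
    have h7 : (7 : ℝ) ≤ ε * ((n : ℝ) - 1) := by
      calc (7 : ℝ) = ε * (7 / ε) := by field_simp
      _ ≤ ε * ((n : ℝ) - 1) := mul_le_mul_of_nonneg_left h1 hε.le
    exact aux9 ε hε n hn4 h7 (fun x => ⟨x % 3, Nat.mod_lt _ (by norm_num)⟩) (fun x => rfl)
end

section
/- Suppose 3 divides n. Define f : ℤ/nℤ → {1,2,3} by f(x) = 1 if the canonical representative of x in {0,...,n−1} is ≡ 0 (mod 3), f(x) = 2 if ≡ 1 (mod 3), f(x) = 3 if ≡ 2 (mod 3). Then exactly (2/3)·n² of the n² triples (x, y, z) ∈ (ℤ/nℤ)³ with x + y = 2z are rainbow. -/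
open Finset

theorem stmt10 (n : ℕ) (hn : 0 < n) (h3 : 3 ∣ n) (f : ZMod n → Fin 3)
    (hf : ∀ x : ZMod n, f x = if x.val % 3 = 0 then 0 else if x.val % 3 = 1 then 1 else 2) :
    (Nat.card {t : ZMod n × ZMod n × ZMod n //
        t.1 + t.2.1 = 2 * t.2.2 ∧ f t.1 ≠ f t.2.1 ∧ f t.1 ≠ f t.2.2 ∧
          f t.2.1 ≠ f t.2.2} : ℝ) = 2 / 3 * n ^ 2 := by
  haveI : NeZero n := ⟨hn.ne'⟩
  obtain ⟨m, hm⟩ := h3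
  set π : ZMod n →+* ZMod 3 := ZMod.castHom ⟨m, hm⟩ (ZMod 3) with hπdef
  have hπval : ∀ x : ZMod n, (π x).val = x.val % 3 := by
    intro x
    rw [hπdef, ZMod.castHom_apply, ← ZMod.natCast_val, ZMod.val_natCast]
  set g : ZMod 3 → Fin 3 := fun a => if a.val = 0 then 0 else if a.val = 1 then 1 else 2
    with hgdef
  have hginj : Function.Injective g := by decide
  have hfg : ∀ x, f x = g (π x) := by
    intro x
    rw [hf, hgdef]
    simp only [hπval]
  have hne : ∀ x y, f x ≠ f y ↔ π x ≠ π y := by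
    intro x y
    rw [hfg, hfg, hginj.ne_iff]
  have hπsub : ∀ x z : ZMod n, π (2 * z - x) = 2 * π z - π x := by
    intro x z
    simp [map_sub, map_mul, map_ofNat]
  have key : ∀ a c : ZMod 3, a ≠ c → a ≠ 2 * c - a ∧ 2 * c - a ≠ c := by decide
  let E : {t : ZMod n × ZMod n × ZMod n //
        t.1 + t.2.1 = 2 * t.2.2 ∧ f t.1 ≠ f t.2.1 ∧ f t.1 ≠ f t.2.2 ∧
          f t.2.1 ≠ f t.2.2} ≃ {p : ZMod n × ZMod n // π p.1 ≠ π p.2} :=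
    { toFun := fun t => ⟨(t.1.1, t.1.2.2), (hne _ _).mp t.2.2.2.1⟩
      invFun := fun p => ⟨(p.1.1, 2 * p.1.2 - p.1.1, p.1.2), by
        obtain ⟨k1, k2⟩ := key _ _ p.2
        refine ⟨by ring, ?_, (hne _ _).mpr p.2, ?_⟩
        · rw [hne, hπsub]; exact k1
        · rw [hne, hπsub]; exact k2⟩
      left_inv := fun t => by
        apply Subtype.ext
        obtain ⟨⟨x, y, z⟩, h, _⟩ := t
        simp only [Prod.mk.injEq, true_and, and_true]
        dsimp only at h ⊢
        linear_combination -h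
      right_inv := fun p => rfl }
  rw [Nat.card_congr E,
    Nat.card_congr (Equiv.subtypeProdEquivSigmaSubtype fun x z : ZMod n => π x ≠ π z),
    Nat.card_eq_fintype_card, Fintype.card_sigma]
  -- fiber counting
  have fib : ∀ a : ZMod 3, (univ.filter fun z : ZMod n => π z = a).card = m := by
    have heq : ∀ a b : ZMod 3, (univ.filter fun z : ZMod n => π z = a).card
        = (univ.filter fun z : ZMod n => π z = b).card := by
      intro a b
      apply Finset.card_bij (fun z _ => z + ((b - a).val : ZMod n))
      · intro z hz
        simp only [mem_filter, mem_univ, true_and] at hz ⊢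
        rw [map_add, hz, map_natCast, ZMod.natCast_val, ZMod.cast_id]
        ring
      · intro z hz w hw h
        exact add_right_cancel h
      · intro w hw
        refine ⟨w - ((b - a).val : ZMod n), ?_, by ring⟩
        simp only [mem_filter, mem_univ, true_and] at hw ⊢
        rw [map_sub, hw, map_natCast, ZMod.natCast_val, ZMod.cast_id]
        ring
    have hsum : ∑ a : ZMod 3, (univ.filter fun z : ZMod n => π z = a).card = n := by
      rw [← Finset.card_eq_sum_card_fiberwise (fun z _ => mem_univ (π z))]
      simp [ZMod.card]
    intro a
    have h3m : ∑ b : ZMod 3, (univ.filter fun z : ZMod n => π z = b).card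
        = 3 * (univ.filter fun z : ZMod n => π z = a).card := by
      rw [Finset.sum_congr rfl fun b _ => heq b a]
      simp [Finset.sum_const, ZMod.card, mul_comm]
    omega
  have hcard : ∀ x : ZMod n, Fintype.card {z : ZMod n // π x ≠ π z} = n - m := by
    intro x
    have e1 : Fintype.card {z : ZMod n // π x ≠ π z}
        = Fintype.card {z : ZMod n // ¬ (π z = π x)} :=
      Fintype.card_congr (Equiv.subtypeEquivRight fun z => ⟨Ne.symm, Ne.symm⟩)
    rw [e1, Fintype.card_subtype_compl, ZMod.card, Fintype.card_subtype, fib]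
  simp only [hcard]
  rw [Finset.sum_const, Finset.card_univ, ZMod.card, smul_eq_mul]
  have hmn : m ≤ n := by omega
  subst hm
  push_cast [Nat.cast_sub hmn]
  ring
end

section
/- For every ε > 0 and all sufficiently large n not divisible by 3, there is a 3-coloring of ℤ/nℤ such that at least (1/3 − ε)·n² of the n² triples (x, y, z) ∈ (ℤ/nℤ)³ with x + y = 2z are rainbow. -/
open Finset

theorem stmt14 (ε : ℝ) (hε : 0 < ε) : ∃ N : ℕ, ∀ n : ℕ, N ≤ n → ¬ (3 ∣ n) →
    ∃ f : ZMod n → Fin 3, Function.Surjective f ∧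
      (1 / 3 - ε) * (n : ℝ) ^ 2 ≤
        (Nat.card {t : ZMod n × ZMod n × ZMod n //
          t.1 + t.2.1 = 2 * t.2.2 ∧ f t.1 ≠ f t.2.1 ∧ f t.1 ≠ f t.2.2 ∧
            f t.2.1 ≠ f t.2.2} : ℝ) := by
  obtain ⟨M, hM⟩ := exists_nat_gt (4 / ε)
  refine ⟨M + 12, fun n hn _h3 => ?_⟩
  have hn12 : 12 ≤ n := by omega
  haveI : NeZero n := ⟨by omega⟩
  set f : ZMod n → Fin 3 := fun x => ⟨x.val % 3, Nat.mod_lt _ (by norm_num)⟩ with hf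
  have hval : ∀ a : ℕ, a < n → ((a : ZMod n)).val = a := fun a ha => ZMod.val_cast_of_lt ha
  refine ⟨f, ?_, ?_⟩
  · intro c
    refine ⟨((c : ℕ) : ZMod n), ?_⟩
    have hc : (c : ℕ) < n := lt_of_lt_of_le c.isLt (by omega)
    ext
    simp [hf, hval _ hc, Nat.mod_eq_of_lt c.isLt]
  · set m := (n - 5) / 6 with hm
    have hcard : Nat.card {t : ZMod n × ZMod n × ZMod n //
          t.1 + t.2.1 = 2 * t.2.2 ∧ f t.1 ≠ f t.2.1 ∧ f t.1 ≠ f t.2.2 ∧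
            f t.2.1 ≠ f t.2.2}
        = (Finset.univ.filter (fun t : ZMod n × ZMod n × ZMod n =>
            t.1 + t.2.1 = 2 * t.2.2 ∧ f t.1 ≠ f t.2.1 ∧ f t.1 ≠ f t.2.2 ∧
            f t.2.1 ≠ f t.2.2)).card := by
      rw [Nat.card_eq_fintype_card, Fintype.card_subtype]
    set bfun : ℕ × ℕ × ℕ → ℕ := fun p =>
      p.1 / 2 + 1 + (p.1 + 4 - (p.1 / 2 + 1) % 3) % 3 + 3 * p.2.1 + p.2.2 with hbfun
    set ι : ℕ × ℕ × ℕ → ZMod n × ZMod n × ZMod n := fun p =>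
      ((p.1 : ZMod n), ((2 * bfun p - p.1 : ℕ) : ZMod n), ((bfun p : ℕ) : ZMod n)) with hι
    set D : Finset (ℕ × ℕ × ℕ) := Finset.range n ×ˢ Finset.range m ×ˢ Finset.range 2 with hD
    have hDb : ∀ p ∈ D, p.1 < n ∧ p.2.1 < m ∧ p.2.2 < 2 := by
      intro p hp
      simp only [hD, Finset.mem_product, Finset.mem_range] at hp
      exact ⟨hp.1, hp.2.1, hp.2.2⟩
    have hbound : ∀ p : ℕ × ℕ × ℕ, p.1 < n → p.2.1 < m → p.2.2 < 2 →
        p.1 < 2 * bfun p ∧ 2 * bfun p < p.1 + n := by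
      intro p h1 h2 h3
      simp only [hbfun]
      omega
    have hmem : ∀ p ∈ D, ι p ∈ Finset.univ.filter (fun t : ZMod n × ZMod n × ZMod n =>
            t.1 + t.2.1 = 2 * t.2.2 ∧ f t.1 ≠ f t.2.1 ∧ f t.1 ≠ f t.2.2 ∧
            f t.2.1 ≠ f t.2.2) := by
      intro p hp
      obtain ⟨ha, hq, ht⟩ := hDb p hp
      obtain ⟨hab, hbn⟩ := hbound p ha hq ht
      have hyn : 2 * bfun p - p.1 < n := by omega
      have hbn' : bfun p < n := by omega
      simp only [Finset.mem_filter, Finset.mem_univ, true_and, hι]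
      refine ⟨?_, ?_, ?_, ?_⟩
      · rw [← Nat.cast_add, (by omega : p.1 + (2 * bfun p - p.1) = 2 * bfun p)]
        push_cast
        ring
      all_goals
        intro h
        have h' := congrArg Fin.val h
        simp only [hf, hval _ ha, hval _ hyn, hval _ hbn'] at h'
        simp only [hbfun] at h'
        omega
    have hinj : Set.InjOn ι D := by
      intro p hp p' hp' h
      obtain ⟨ha, hq, ht⟩ := hDb p hp
      obtain ⟨ha', hq', ht'⟩ := hDb p' hp'
      obtain ⟨hab, hbn⟩ := hbound p ha hq ht
      obtain ⟨hab', hbn'⟩ := hbound p' ha' hq' ht'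
      have e1 : (p.1 : ZMod n) = (p'.1 : ZMod n) := congrArg Prod.fst h
      have e3 : ((bfun p : ℕ) : ZMod n) = ((bfun p' : ℕ) : ZMod n) :=
        congrArg (fun t : ZMod n × ZMod n × ZMod n => t.2.2) h
      have ea : p.1 = p'.1 := by
        have := congrArg ZMod.val e1
        rwa [hval _ ha, hval _ ha'] at this
      have eb : bfun p = bfun p' := by
        have := congrArg ZMod.val e3
        rwa [hval _ (by omega : bfun p < n), hval _ (by omega : bfun p' < n)] at this
      simp only [hbfun] at eb
      obtain ⟨a, q, t⟩ := p
      obtain ⟨a', q', t'⟩ := p'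
      simp only [Prod.mk.injEq]
      simp only at ea eb ha hq ht ha' hq' ht'
      refine ⟨ea, ?_, ?_⟩ <;> omega
    have hle : D.card ≤ (Finset.univ.filter (fun t : ZMod n × ZMod n × ZMod n =>
            t.1 + t.2.1 = 2 * t.2.2 ∧ f t.1 ≠ f t.2.1 ∧ f t.1 ≠ f t.2.2 ∧
            f t.2.1 ≠ f t.2.2)).card :=
      Finset.card_le_card_of_injOn ι hmem hinj
    have hDcard : D.card = n * (m * 2) := by
      simp [hD]
    rw [hcard]
    have hle' : ((n * (m * 2) : ℕ) : ℝ) ≤ ((Finset.univ.filter (fun t : ZMod n × ZMod n × ZMod n =>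
            t.1 + t.2.1 = 2 * t.2.2 ∧ f t.1 ≠ f t.2.1 ∧ f t.1 ≠ f t.2.2 ∧
            f t.2.1 ≠ f t.2.2)).card : ℝ) := by
      exact_mod_cast hDcard ▸ hle
    refine le_trans ?_ hle'
    have h1 : (4 : ℝ) < ε * M := by
      have := (div_lt_iff₀ hε).mp hM
      linarith
    have h2 : (M : ℝ) ≤ (n : ℝ) := by exact_mod_cast (by omega : M ≤ n)
    have h3 : (n : ℝ) ≤ 6 * (m : ℝ) + 10 := by exact_mod_cast (by omega : n ≤ 6 * m + 10)
    have h4 : (12 : ℝ) ≤ (n : ℝ) := by exact_mod_cast hn12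
    have h5 : (4 : ℝ) < ε * n := lt_of_lt_of_le h1 (by nlinarith)
    push_cast
    nlinarith [h3, h5, h4, sq_nonneg ((n : ℝ))]
end

section
/- Suppose 5 divides n. Define f : ℤ/nℤ → {1,2,3} by mapping x to 1 if its representative in {0,...,n−1} is ≡ 0 (mod 5), to 2 if ≡ ±1 (mod 5), and to 3 if ≡ ±2 (mod 5). Then the number of monochromatic triples (x, y, z) ∈ (ℤ/nℤ)³ with x + y = z equals n²/25. -/
theorem stmt15 (n : ℕ) (hn : 0 < n) (h5 : 5 ∣ n) (f : ZMod n → Fin 3)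
    (hf : ∀ x : ZMod n, f x = if x.val % 5 = 0 then 0
      else if x.val % 5 = 1 ∨ x.val % 5 = 4 then 1 else 2) :
    Nat.card {t : ZMod n × ZMod n × ZMod n //
        t.1 + t.2.1 = t.2.2 ∧ f t.1 = f t.2.1 ∧ f t.2.1 = f t.2.2} = n ^ 2 / 25 := by
  obtain ⟨m, rfl⟩ := h5
  have hm : 0 < m := by omega
  haveI : NeZero (5 * m) := ⟨by omega⟩
  have key : ∀ x y : ZMod (5 * m),
      (f x = f y ∧ f y = f (x + y)) ↔ (x.val % 5 = 0 ∧ y.val % 5 = 0) := by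
    intro x y
    have hz : (x + y).val % 5 = (x.val % 5 + y.val % 5) % 5 := by
      rw [ZMod.val_add, Nat.mod_mod_of_dvd _ ⟨m, rfl⟩, Nat.add_mod]
    rw [hf x, hf y, hf (x + y), hz]
    have hx5 : x.val % 5 < 5 := Nat.mod_lt _ (by norm_num)
    have hy5 : y.val % 5 < 5 := Nat.mod_lt _ (by norm_num)
    set a := x.val % 5 with ha
    set b := y.val % 5 with hb
    clear_value a b
    interval_cases a <;> interval_cases b <;> decide
  have e1 : {t : ZMod (5 * m) × ZMod (5 * m) × ZMod (5 * m) //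
        t.1 + t.2.1 = t.2.2 ∧ f t.1 = f t.2.1 ∧ f t.2.1 = f t.2.2} ≃
      {p : ZMod (5 * m) × ZMod (5 * m) // p.1.val % 5 = 0 ∧ p.2.val % 5 = 0} :=
    { toFun := fun t => ⟨(t.val.1, t.val.2.1), by
        obtain ⟨h1, h2, h3⟩ := t.prop
        exact (key _ _).mp ⟨h2, by rwa [h1]⟩⟩
      invFun := fun p => ⟨(p.val.1, p.val.2, p.val.1 + p.val.2),
        ⟨rfl, ((key _ _).mpr p.prop).1, ((key _ _).mpr p.prop).2⟩⟩
      left_inv := fun t => by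
        obtain ⟨⟨x, y, z⟩, h1, h2, h3⟩ := t
        simp only [Subtype.mk.injEq, Prod.mk.injEq]
        exact ⟨trivial, trivial, h1⟩
      right_inv := fun p => rfl }
  have e3 : {x : ZMod (5 * m) // x.val % 5 = 0} ≃ Fin m :=
    { toFun := fun x => ⟨x.val.val / 5, by
        have h := x.val.val_lt
        have h2 := x.prop
        omega⟩
      invFun := fun j => ⟨((5 * j.val : ℕ) : ZMod (5 * m)), by
        have hj : 5 * j.val < 5 * m := by have := j.isLt; omega
        rw [ZMod.val_natCast, Nat.mod_eq_of_lt hj, Nat.mul_mod_right]⟩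
      left_inv := fun x => by
        apply Subtype.ext
        show ((5 * ((x : ZMod (5 * m)).val / 5) : ℕ) : ZMod (5 * m)) = (x : ZMod (5 * m))
        rw [Nat.mul_div_cancel' (Nat.dvd_of_mod_eq_zero x.prop)]
        exact ZMod.natCast_rightInverse x.val
      right_inv := fun j => by
        apply Fin.ext
        show ((5 * j.val : ℕ) : ZMod (5 * m)).val / 5 = j.val
        have hj : 5 * j.val < 5 * m := by have := j.isLt; omega
        rw [ZMod.val_natCast, Nat.mod_eq_of_lt hj]
        omega }
  rw [Nat.card_congr (e1.trans ((Equiv.subtypeProdEquivProd).trans (e3.prodCongr e3)))]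
  simp [Nat.card_eq_fintype_card]
  ring_nf
  omega
end

section
/- Suppose 5 divides n, and define f : ℤ/nℤ → {1,2,3} as above (1 if representative ≡ 0 mod 5, 2 if ≡ ±1 mod 5, 3 if ≡ ±2 mod 5). Then every monochromatic triple (x, y, z) with x + y = z in ℤ/nℤ has all three elements of color 1 (red). -/
theorem stmt16 (n : ℕ) (hn : 0 < n) (h5 : 5 ∣ n) (f : ZMod n → Fin 3)
    (hf : ∀ x : ZMod n, f x = if x.val % 5 = 0 then 0
      else if x.val % 5 = 1 ∨ x.val % 5 = 4 then 1 else 2) :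
    ∀ x y z : ZMod n, x + y = z → f x = f y → f y = f z → f x = 0 := by
  intro x y z hxyz hxy hyz
  haveI : NeZero n := ⟨hn.ne'⟩
  have hz : z.val % 5 = (x.val % 5 + y.val % 5) % 5 := by
    rw [← hxyz, ZMod.val_add, Nat.mod_mod_of_dvd _ h5, Nat.add_mod]
  rw [hf x, hf y] at hxy
  rw [hf y, hf z] at hyz
  rw [hf x]
  have hx5 := Nat.mod_lt x.val (show 0 < 5 by norm_num)
  have hy5 := Nat.mod_lt y.val (show 0 < 5 by norm_num)
  split_ifs at hxy hyz ⊢ <;> first | rfl | omega | simp_all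
end

section
/- For every ε > 0 and all sufficiently large n, there exists a 3-coloring f of ℤ/nℤ such that the number of monochromatic triples (x, y, z) ∈ (ℤ/nℤ)³ with x + y = z is at most (1/10 + ε)·n². -/
open Finset

/-- Triangle counting: pairs with `a + b < K` number at most `K(K+1)/2`. -/
private lemma tri_card (n K : ℕ) :
    2 * ((range n ×ˢ range n).filter (fun p => p.1 + p.2 < K)).card ≤ K * (K + 1) := by
  have h : ((range n ×ˢ range n).filter (fun p => p.1 + p.2 < K)).card ≤
      ((range K).sigma fun s => range (s + 1)).card := by
    apply Finset.card_le_card_of_injOn (fun p => (⟨p.1 + p.2, p.1⟩ : Σ _ : ℕ, ℕ))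
    · intro p hp
      simp only [Finset.mem_coe, mem_filter, mem_product, mem_range] at hp
      simp only [Finset.mem_coe, Finset.mem_sigma, Finset.mem_range]
      omega
    · intro p hp q hq hpq
      simp only [Sigma.mk.inj_iff, heq_eq_eq] at hpq
      exact Prod.ext hpq.2 (by omega)
  have h2 : ((range K).sigma fun s => range (s + 1)).card = (∑ s ∈ range K, s) + K := by
    rw [Finset.card_sigma]
    simp [Finset.sum_add_distrib]
  have h3 : (∑ i ∈ range K, i) * 2 = K * (K - 1) := Finset.sum_range_id_mul_two K
  have h4 : K * (K - 1) + 2 * K = K * (K + 1) := by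
    rcases K with _ | k
    · simp
    · simp only [Nat.succ_sub_one]; ring
  omega

theorem stmt18 (ε : ℝ) (hε : 0 < ε) : ∃ N : ℕ, ∀ n : ℕ, N ≤ n →
    ∃ f : ZMod n → Fin 3, Function.Surjective f ∧
      (Nat.card {t : ZMod n × ZMod n × ZMod n //
        t.1 + t.2.1 = t.2.2 ∧ f t.1 = f t.2.1 ∧ f t.2.1 = f t.2.2} : ℝ) ≤
      (1 / 10 + ε) * (n : ℝ) ^ 2 := by
  refine ⟨max 10 (⌈5 / ε⌉₊ + 1), fun n hn => ?_⟩
  have hn10 : 10 ≤ n := le_trans (le_max_left _ _) hn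
  haveI : NeZero n := ⟨by omega⟩
  set f : ZMod n → Fin 3 :=
    fun x => if 10 * x.val < 3 * n then 0 else if 10 * x.val < 7 * n then 1 else 2 with hf
  -- color characterization
  have hcolor : ∀ x y : ZMod n, f x = f y →
      (10 * x.val < 3 * n ∧ 10 * y.val < 3 * n) ∨
      (3 * n ≤ 10 * x.val ∧ 10 * x.val < 7 * n ∧ 3 * n ≤ 10 * y.val ∧ 10 * y.val < 7 * n) ∨
      (7 * n ≤ 10 * x.val ∧ 7 * n ≤ 10 * y.val) := by
    intro x y h
    simp only [hf] at h
    split_ifs at h <;> omega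
  refine ⟨f, ?_, ?_⟩
  · -- surjectivity
    have hv0 : ((0 : ℕ) : ZMod n).val = 0 := ZMod.val_cast_of_lt (by omega)
    have hv1 : ((n / 2 : ℕ) : ZMod n).val = n / 2 := ZMod.val_cast_of_lt (by omega)
    have hv2 : ((n - 1 : ℕ) : ZMod n).val = n - 1 := ZMod.val_cast_of_lt (by omega)
    intro c
    fin_cases c
    · exact ⟨((0 : ℕ) : ZMod n), by simp only [hf, hv0]; rw [if_pos (by omega)]; rfl⟩
    · exact ⟨((n / 2 : ℕ) : ZMod n), by
        simp only [hf, hv1]; rw [if_neg (by omega), if_pos (by omega)]; rfl⟩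
    · exact ⟨((n - 1 : ℕ) : ZMod n), by
        simp only [hf, hv2]; rw [if_neg (by omega), if_neg (by omega)]; rfl⟩
  -- counting
  set Q : ℕ × ℕ → Prop := fun p =>
    (10 * p.1 < 3 * n ∧ 10 * p.2 < 3 * n ∧ 10 * ((p.1 + p.2) % n) < 3 * n) ∨
    (3 * n ≤ 10 * p.1 ∧ 10 * p.1 < 7 * n ∧ 3 * n ≤ 10 * p.2 ∧ 10 * p.2 < 7 * n ∧
      3 * n ≤ 10 * ((p.1 + p.2) % n) ∧ 10 * ((p.1 + p.2) % n) < 7 * n) ∨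
    (7 * n ≤ 10 * p.1 ∧ 7 * n ≤ 10 * p.2 ∧ 7 * n ≤ 10 * ((p.1 + p.2) % n)) with hQ
  have : DecidablePred Q := fun _ => by rw [hQ]; infer_instance
  set S : Finset (ℕ × ℕ) := (range n ×ˢ range n).filter Q with hS
  -- step 1 : Nat.card of the subtype ≤ S.card
  have step1 : Nat.card {t : ZMod n × ZMod n × ZMod n //
      t.1 + t.2.1 = t.2.2 ∧ f t.1 = f t.2.1 ∧ f t.2.1 = f t.2.2} ≤ S.card := by
    rw [← Nat.card_eq_finsetCard S]
    apply Nat.card_le_card_of_injective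
      (f := fun t => (⟨(t.val.1.val, t.val.2.1.val), by
        obtain ⟨hz, hxy, hyz⟩ := t.prop
        have hzz : t.val.2.2.val = (t.val.1.val + t.val.2.1.val) % n := by
          rw [← hz]; exact ZMod.val_add _ _
        simp only [hS, mem_filter, mem_product, mem_range, hQ]
        refine ⟨⟨ZMod.val_lt _, ZMod.val_lt _⟩, ?_⟩
        rcases hcolor _ _ hxy with h1 | h1 | h1 <;>
          rcases hcolor _ _ hyz with h2 | h2 | h2 <;> omega⟩ : {p // p ∈ S}))
    intro t1 t2 h
    simp only [Subtype.mk.injEq, Prod.mk.injEq] at h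
    have hx : t1.val.1 = t2.val.1 := ZMod.val_injective n h.1
    have hy : t1.val.2.1 = t2.val.2.1 := ZMod.val_injective n h.2
    have hzval : t1.val.2.2 = t2.val.2.2 := by
      rw [← t1.prop.1, ← t2.prop.1, hx, hy]
    exact Subtype.ext (Prod.ext hx (Prod.ext hy hzval))
  -- step 2 : bound S.card
  set K : ℕ := 3 * n / 10 + 1 with hK
  set M : ℕ := n / 10 + 1 with hM
  set T : ℕ → Finset (ℕ × ℕ) :=
    fun L => (range n ×ˢ range n).filter (fun p => p.1 + p.2 < L) with hT
  -- the four pieces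
  set SA := (range n ×ˢ range n).filter
    (fun p => 10 * p.1 < 3 * n ∧ 10 * p.2 < 3 * n ∧ 10 * (p.1 + p.2) < 3 * n) with hSA
  set SB1 := (range n ×ˢ range n).filter
    (fun p => 3 * n ≤ 10 * p.1 ∧ 3 * n ≤ 10 * p.2 ∧ 10 * (p.1 + p.2) < 7 * n) with hSB1
  set SB2 := (range n ×ˢ range n).filter
    (fun p => 10 * p.1 < 7 * n ∧ 10 * p.2 < 7 * n ∧ 13 * n ≤ 10 * (p.1 + p.2)) with hSB2
  set SC := (range n ×ˢ range n).filter
    (fun p => 7 * n ≤ 10 * p.1 ∧ 7 * n ≤ 10 * p.2 ∧ 17 * n ≤ 10 * (p.1 + p.2)) with hSC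
  have hsub : S ⊆ SA ∪ SB1 ∪ SB2 ∪ SC := by
    intro p hp
    simp only [hS, mem_filter, mem_product, mem_range, hQ] at hp
    obtain ⟨⟨ha, hb⟩, hq⟩ := hp
    simp only [hSA, hSB1, hSB2, hSC, mem_union, mem_filter, mem_product, mem_range]
    rcases hq with h | h | h
    · have hlt : p.1 + p.2 < n := by omega
      rw [Nat.mod_eq_of_lt hlt] at h
      exact Or.inl (Or.inl (Or.inl ⟨⟨ha, hb⟩, h.1, h.2.1, h.2.2⟩))
    · by_cases hlt : p.1 + p.2 < n
      · rw [Nat.mod_eq_of_lt hlt] at h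
        exact Or.inl (Or.inl (Or.inr ⟨⟨ha, hb⟩, h.1, h.2.2.1, h.2.2.2.2.2⟩))
      · have hm : (p.1 + p.2) % n = p.1 + p.2 - n := by
          rw [Nat.mod_eq_sub_mod (by omega), Nat.mod_eq_of_lt (by omega)]
        rw [hm] at h
        exact Or.inl (Or.inr ⟨⟨ha, hb⟩, h.2.1, h.2.2.2.1, by omega⟩)
    · have hge : n ≤ p.1 + p.2 := by omega
      have hm : (p.1 + p.2) % n = p.1 + p.2 - n := by
        rw [Nat.mod_eq_sub_mod hge, Nat.mod_eq_of_lt (by omega)]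
      rw [hm] at h
      exact Or.inr ⟨⟨ha, hb⟩, h.1, h.2.1, by omega⟩
  have hSA_le : SA.card ≤ (T K).card := by
    apply Finset.card_le_card
    intro p hp
    simp only [hSA, hT, hK, mem_filter, mem_product, mem_range] at hp ⊢
    omega
  have hSC_le : SC.card ≤ (T K).card := by
    apply Finset.card_le_card_of_injOn (fun p => (n - 1 - p.1, n - 1 - p.2))
    · intro p hp
      simp only [hSC, hT, hK, Finset.mem_coe, mem_filter, mem_product, mem_range] at hp ⊢
      omega
    · intro p hp q hq hpq
      simp only [hSC, Finset.mem_coe, mem_filter, mem_product, mem_range] at hp hq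
      simp only [Prod.mk.injEq] at hpq
      exact Prod.ext (by omega) (by omega)
  have hSB1_le : SB1.card ≤ (T M).card := by
    apply Finset.card_le_card_of_injOn
      (fun p => (p.1 - (3 * n + 9) / 10, p.2 - (3 * n + 9) / 10))
    · intro p hp
      simp only [hSB1, hT, hM, Finset.mem_coe, mem_filter, mem_product, mem_range] at hp ⊢
      omega
    · intro p hp q hq hpq
      simp only [hSB1, Finset.mem_coe, mem_filter, mem_product, mem_range] at hp hq
      simp only [Prod.mk.injEq] at hpq
      exact Prod.ext (by omega) (by omega)
  have hSB2_le : SB2.card ≤ (T M).card := by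
    apply Finset.card_le_card_of_injOn
      (fun p => ((7 * n - 1) / 10 - p.1, (7 * n - 1) / 10 - p.2))
    · intro p hp
      simp only [hSB2, hT, hM, Finset.mem_coe, mem_filter, mem_product, mem_range] at hp ⊢
      omega
    · intro p hp q hq hpq
      simp only [hSB2, Finset.mem_coe, mem_filter, mem_product, mem_range] at hp hq
      simp only [Prod.mk.injEq] at hpq
      exact Prod.ext (by omega) (by omega)
  have hTK : 2 * (T K).card ≤ K * (K + 1) := tri_card n K
  have hTM : 2 * (T M).card ≤ M * (M + 1) := tri_card n M
  have hScard : S.card ≤ K * (K + 1) + M * (M + 1) := by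
    have h1 : S.card ≤ SA.card + SB1.card + SB2.card + SC.card := by
      calc S.card ≤ (SA ∪ SB1 ∪ SB2 ∪ SC).card := Finset.card_le_card hsub
      _ ≤ _ := by
        refine le_trans (Finset.card_union_le _ _) ?_
        refine add_le_add ?_ le_rfl
        refine le_trans (Finset.card_union_le _ _) ?_
        exact add_le_add (Finset.card_union_le _ _) le_rfl
    omega
  -- step 3 : real estimates
  have hKr : (K : ℝ) ≤ 3 / 10 * n + 1 := by
    have h1 : ((3 * n / 10 : ℕ) : ℝ) ≤ ((3 * n : ℕ) : ℝ) / ((10 : ℕ) : ℝ) := Nat.cast_div_le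
    push_cast at h1
    push_cast [hK]
    linarith
  have hMr : (M : ℝ) ≤ 1 / 10 * n + 1 := by
    have h1 : ((n / 10 : ℕ) : ℝ) ≤ ((n : ℕ) : ℝ) / ((10 : ℕ) : ℝ) := Nat.cast_div_le
    push_cast at h1
    push_cast [hM]
    linarith
  have hnr : (10 : ℝ) ≤ n := by exact_mod_cast hn10
  have hεn : 5 ≤ ε * n := by
    have h5 : (⌈5 / ε⌉₊ : ℝ) + 1 ≤ n := by
      exact_mod_cast le_trans (le_max_right 10 (⌈5 / ε⌉₊ + 1)) hn
    have := Nat.le_ceil (5 / ε)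
    have h2 : 5 / ε ≤ n := by linarith
    calc (5 : ℝ) = ε * (5 / ε) := by field_simp
    _ ≤ ε * n := by apply mul_le_mul_of_nonneg_left h2 hε.le
  calc (Nat.card {t : ZMod n × ZMod n × ZMod n //
        t.1 + t.2.1 = t.2.2 ∧ f t.1 = f t.2.1 ∧ f t.2.1 = f t.2.2} : ℝ)
      ≤ (S.card : ℝ) := by exact_mod_cast step1
    _ ≤ (K : ℝ) * (K + 1) + (M : ℝ) * (M + 1) := by exact_mod_cast hScard
    _ ≤ (3 / 10 * n + 1) * (3 / 10 * n + 2) + (1 / 10 * n + 1) * (1 / 10 * n + 2) := by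
        have hK0 : (0 : ℝ) ≤ K := Nat.cast_nonneg K
        have hM0 : (0 : ℝ) ≤ M := Nat.cast_nonneg M
        nlinarith [hKr, hMr, hnr]
    _ = 1 / 10 * n ^ 2 + (12 / 10 * n + 4) := by ring
    _ ≤ 1 / 10 * n ^ 2 + ε * n ^ 2 := by nlinarith [hεn, hnr]
    _ = (1 / 10 + ε) * n ^ 2 := by ring
end
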